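/- Let H = ⟨ω^d, ω^e·α^s⟩ be a subgroup of ΓL_1(p^r) in standard form, i.e., s > 0, s | r, d > 0, d | p^r − 1, 0 ≤ e < d, and d divides e·(p^r − 1)/(p^s − 1). Then the order of H equals (p^r − 1)·r/(d·s). -/
import Mathlib

set_option maxHeartbeats 1000000 in
theorem stmt_18 (p r d e s : ℕ) [Fact p.Prime] (hr : 0 < r)
    (ω : GaloisField p r) (hω0 : ω ≠ 0)
    (hω : ∀ y : GaloisField p r, y ≠ 0 → ∃ n : ℕ, ω ^ n = y)
    (hs : 0 < s) (hsr : s ∣ r) (hd : 0 < d) (hdq : d ∣ p ^ r - 1)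
    (hed : e < d) (hdiv : d ∣ e * ((p ^ r - 1) / (p ^ s - 1))) :
    let σω : Equiv.Perm (GaloisField p r) := Equiv.mulLeft₀ ω hω0
    let σα : Equiv.Perm (GaloisField p r) := (frobeniusEquiv (GaloisField p r) p).toEquiv
    let H : Subgroup (Equiv.Perm (GaloisField p r)) :=
      Subgroup.closure {σω ^ d, σω ^ e * σα ^ s}
    Nat.card H = (p ^ r - 1) * r / (d * s) := by
  intro σω σα H
  have hp : p.Prime := Fact.out
  letI : Fintype (GaloisField p r) := Fintype.ofFinite _
  have hcard : Fintype.card (GaloisField p r) = p ^ r := by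
    rw [← Nat.card_eq_fintype_card, GaloisField.card p r hr.ne']
  -- basic evaluation lemmas
  have hσω1 : ∀ x : (GaloisField p r), σω x = ω * x := fun x => rfl
  have hσα1 : ∀ x : (GaloisField p r), σα x = x ^ p := fun x => rfl
  have hσω : ∀ (m : ℕ) (x : (GaloisField p r)), (σω ^ m) x = ω ^ m * x := by
    intro m
    induction m with
    | zero => intro x; simp
    | succ n ih =>
      intro x
      rw [pow_succ, Equiv.Perm.mul_apply, hσω1, ih, pow_succ]
      ring
  have hσα : ∀ (t : ℕ) (x : (GaloisField p r)), (σα ^ t) x = x ^ p ^ t := by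
    intro t
    induction t with
    | zero => intro x; simp
    | succ n ih =>
      intro x
      rw [pow_succ, Equiv.Perm.mul_apply, hσα1, ih, ← pow_mul, ← pow_succ']
  have heval : ∀ (m t : ℕ) (x : (GaloisField p r)), (σω ^ m * σα ^ t) x = ω ^ m * x ^ p ^ t := by
    intro m t x
    rw [Equiv.Perm.mul_apply, hσα, hσω]
  -- commutation relation
  have hcomm : ∀ (t m : ℕ), σα ^ t * σω ^ m = σω ^ (m * p ^ t) * σα ^ t := by
    intro t m
    ext x
    rw [Equiv.Perm.mul_apply, hσα, hσω, heval, mul_pow, ← pow_mul]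
  -- order of ω
  have hordu : orderOf (Units.mk0 ω hω0) = p ^ r - 1 := by
    have h1 : ∀ v : (GaloisField p r)ˣ, v ∈ Subgroup.zpowers (Units.mk0 ω hω0) := by
      intro v
      obtain ⟨n, hn⟩ := hω v v.ne_zero
      exact ⟨(n : ℤ), Units.ext (by
        show ((Units.mk0 ω hω0 ^ (n : ℤ) : _) : (GaloisField p r)) = v
        rw [zpow_natCast]; push_cast [Units.val_mk0]; exact hn)⟩
    have h2 := orderOf_eq_card_of_forall_mem_zpowers h1
    have hcard' : Nat.card (GaloisField p r)ˣ = p ^ r - 1 := by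
      rw [Nat.card_units, GaloisField.card p r hr.ne']
    rw [h2, hcard']
  have hord : orderOf ω = p ^ r - 1 := by
    have h3 : orderOf ((Units.mk0 ω hω0 : (GaloisField p r)ˣ) : (GaloisField p r)) = orderOf (Units.mk0 ω hω0) := orderOf_units
    simp only [Units.val_mk0] at h3
    rw [h3, hordu]
  have hpowinj : ∀ a b : ℕ, ω ^ a = ω ^ b → a ≡ b [MOD p ^ r - 1] := by
    intro a b hab
    have h : (Units.mk0 ω hω0) ^ a = (Units.mk0 ω hω0) ^ b := Units.ext (by
      rw [Units.val_pow_eq_pow_val, Units.val_pow_eq_pow_val, Units.val_mk0]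
      exact hab)
    have := pow_eq_pow_iff_modEq.mp h
    rwa [hordu] at this
  have hq1 : 1 ≤ p ^ r - 1 := by
    have : 2 ≤ p ^ r := by
      calc 2 = 2 ^ 1 := rfl
      _ ≤ p ^ r := Nat.pow_le_pow_left hp.two_le r |>.trans' (Nat.pow_le_pow_right (by omega) hr)
    omega
  have hωq : ω ^ (p ^ r - 1) = 1 := by rw [← hord]; exact pow_orderOf_eq_one ω
  have hσωq : σω ^ (p ^ r - 1) = 1 := by
    ext x; rw [hσω, hωq, one_mul]; rfl
  have hσαr : σα ^ r = 1 := by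
    ext x
    rw [hσα, ← hcard, FiniteField.pow_card]; rfl
  -- set up main objects
  set A : Equiv.Perm (GaloisField p r) := σω ^ e * σα ^ s with hAdef
  set k := r / s with hkdef
  set D := (p ^ r - 1) / d with hDdef
  have hsk : s * k = r := Nat.mul_div_cancel' hsr
  have hdD : d * D = p ^ r - 1 := Nat.mul_div_cancel' hdq
  have hk0 : 0 < k := by
    rcases Nat.eq_zero_or_pos k with h | h
    · rw [h, mul_zero] at hsk; omega
    · exact h
  have hD0 : 0 < D := by
    rcases Nat.eq_zero_or_pos D with h | h
    · rw [h, mul_zero] at hdD; omega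
    · exact h
  set gs : ℕ → ℕ := fun t => ∑ i ∈ Finset.range t, p ^ (s * i) with hgsdef
  have hgs_succ : ∀ t, gs (t + 1) = gs t + p ^ (s * t) := by
    intro t; simp [hgsdef, Finset.sum_range_succ]
  have hgs : ∀ t, (p ^ s - 1) * gs t = p ^ (s * t) - 1 := by
    intro t
    induction t with
    | zero => simp [hgsdef]
    | succ n ih =>
      have h1 : p ^ (s * (n + 1)) = p ^ (s * n) * p ^ s := by
        rw [← pow_add, mul_add, mul_one]
      have hp1 : 1 ≤ p ^ (s * n) := Nat.one_le_pow _ _ hp.pos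
      have hp2 : 1 ≤ p ^ s := Nat.one_le_pow _ _ hp.pos
      rw [hgs_succ, Nat.mul_add, ih, h1]
      have := Nat.mul_le_mul hp1 hp2
      zify [hp1, hp2, this]
      ring
  -- A ^ t formula
  have hA : ∀ t : ℕ, A ^ t = σω ^ (e * gs t) * σα ^ (s * t) := by
    intro t
    induction t with
    | zero => simp [hgsdef]
    | succ n ih =>
      rw [pow_succ, ih, hAdef, mul_assoc, ← mul_assoc (σα ^ (s * n)), hcomm (s * n) e,
        mul_assoc, ← pow_add, ← mul_assoc, ← pow_add, hgs_succ, mul_add, mul_add, mul_one]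
  have hAcomm : ∀ (t m : ℕ), A ^ t * σω ^ m = σω ^ (m * p ^ (s * t)) * A ^ t := by
    intro t m
    rw [hA t, mul_assoc, hcomm (s * t) m, ← mul_assoc, ← pow_add, ← mul_assoc, ← pow_add,
      Nat.add_comm]
  -- d divides e * gs k
  have hE : d ∣ e * gs k := by
    have h1 : (p ^ s - 1) * gs k = p ^ r - 1 := by rw [hgs k, hsk]
    have hps1 : 0 < p ^ s - 1 := by
      have : 2 ≤ p ^ s := by
        calc 2 = 2 ^ 1 := rfl
        _ ≤ p ^ s := (Nat.pow_le_pow_left hp.two_le s).trans' (Nat.pow_le_pow_right (by omega) hs)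
      omega
    have h2 : gs k = (p ^ r - 1) / (p ^ s - 1) := by
      rw [← h1, Nat.mul_div_cancel_left _ hps1]
    rw [h2]; exact hdiv
  have hAk : A ^ k = σω ^ (e * gs k) := by
    rw [hA k, hsk, hσαr, mul_one]
  -- products
  have hF : ∀ (j t j' t' : ℕ),
      (σω ^ (d * j) * A ^ t) * (σω ^ (d * j') * A ^ t')
        = σω ^ (d * (j + j' * p ^ (s * t))) * A ^ (t + t') := by
    intro j t j' t'
    rw [mul_assoc, ← mul_assoc (A ^ t), hAcomm t (d * j'), mul_assoc, ← pow_add,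
      ← mul_assoc, ← pow_add]
    congr 2
    ring
  -- the carrier set
  set T : Set (Equiv.Perm (GaloisField p r)) := {x | ∃ j t : ℕ, x = σω ^ (d * j) * A ^ t} with hTdef
  have hone : (1 : Equiv.Perm (GaloisField p r)) ∈ T := ⟨0, 0, by simp⟩
  have hmulT : ∀ x ∈ T, ∀ y ∈ T, x * y ∈ T := by
    rintro x ⟨j, t, rfl⟩ y ⟨j', t', rfl⟩
    exact ⟨j + j' * p ^ (s * t), t + t', hF j t j' t'⟩
  have hpowT : ∀ x ∈ T, ∀ n : ℕ, x ^ n ∈ T := by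
    intro x hx n
    induction n with
    | zero => simpa using hone
    | succ m ih => rw [pow_succ]; exact hmulT _ ih _ hx
  have hinvT : ∀ x ∈ T, x⁻¹ ∈ T := by
    intro x hx
    have h2 : 0 < orderOf x := orderOf_pos x
    have h1 : x ^ (orderOf x - 1) * x = 1 := by
      rw [← pow_succ, Nat.sub_add_cancel h2]; exact pow_orderOf_eq_one x
    rw [inv_eq_of_mul_eq_one_left h1]
    exact hpowT x hx _
  set S : Subgroup (Equiv.Perm (GaloisField p r)) :=
    { carrier := T
      one_mem' := hone
      mul_mem' := fun ha hb => hmulT _ ha _ hb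
      inv_mem' := fun ha => hinvT _ ha } with hSdef
  -- H = S
  have hHS : H = S := by
    apply le_antisymm
    · apply (Subgroup.closure_le S).mpr
      rintro x hx
      rcases hx with rfl | rfl
      · exact ⟨1, 0, by simp⟩
      · exact ⟨0, 1, by simp [hAdef]⟩
    · rintro x ⟨j, t, rfl⟩
      have h1 : σω ^ d ∈ H := Subgroup.subset_closure (Set.mem_insert _ _)
      have h2 : A ∈ H := Subgroup.subset_closure (Set.mem_insert_iff.mpr (Or.inr rfl))
      have : σω ^ (d * j) = (σω ^ d) ^ j := by rw [← pow_mul]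
      rw [this]
      exact mul_mem (pow_mem h1 j) (pow_mem h2 t)
  -- reduction: T = range of G on Fin D × Fin k
  have hredj : ∀ m : ℕ, σω ^ (d * m) = σω ^ (d * (m % D)) := by
    intro m
    conv_lhs => rw [← Nat.mod_add_div m D]
    rw [mul_add, pow_add, ← mul_assoc d, pow_mul (σω) (d * D), hdD, hσωq, one_pow, mul_one]
  set G : Fin D × Fin k → Equiv.Perm (GaloisField p r) := fun jt => σω ^ (d * (jt.1 : ℕ)) * A ^ (jt.2 : ℕ)
    with hGdef
  have hTG : T = Set.range G := by
    apply Set.eq_of_subset_of_subset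
    · rintro x ⟨j, t, rfl⟩
      obtain ⟨c, hc⟩ := hE
      have ht : A ^ t = σω ^ (d * (c * (t / k))) * A ^ (t % k) := by
        conv_lhs => rw [← Nat.div_add_mod t k, pow_add, pow_mul, hAk, hc, ← pow_mul]
        rw [mul_assoc]
      refine ⟨(⟨(j + c * (t / k)) % D, Nat.mod_lt _ hD0⟩, ⟨t % k, Nat.mod_lt _ hk0⟩), ?_⟩
      simp only [hGdef]
      rw [← hredj, mul_add, pow_add, mul_assoc, ← ht]
    · rintro x ⟨⟨j, t⟩, rfl⟩
      exact ⟨j, t, rfl⟩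
  have hGinj : Function.Injective G := by
    rintro ⟨⟨j, hj⟩, ⟨t, ht⟩⟩ ⟨⟨j', hj'⟩, ⟨t', ht'⟩⟩ hEq
    simp only [hGdef] at hEq
    rw [hA t, hA t', ← mul_assoc, ← pow_add, ← mul_assoc, ← pow_add] at hEq
    have heq1 := congrArg (fun f : Equiv.Perm (GaloisField p r) => f 1) hEq
    have heq2 := congrArg (fun f : Equiv.Perm (GaloisField p r) => f ω) hEq
    simp only [heval, one_pow, mul_one] at heq1 heq2
    rw [heq1] at heq2
    have hωne : ω ^ (d * j' + e * gs t') ≠ 0 := pow_ne_zero _ hω0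
    have hcancel : ω ^ p ^ (s * t) = ω ^ p ^ (s * t') := mul_left_cancel₀ hωne heq2
    have hmod : p ^ (s * t) ≡ p ^ (s * t') [MOD p ^ r - 1] := hpowinj _ _ hcancel
    -- t = t'
    have htt : t = t' := by
      rcases Nat.eq_or_lt_of_le (Nat.one_le_iff_ne_zero.mpr hk0.ne') with hk1 | hk2
      · omega
      · -- k ≥ 2, so r ≥ 2s ≥ 2
        have hr2 : 2 * s ≤ r := by
          have : 2 * s ≤ s * k := by
            have : 2 ≤ k := hk2
            calc 2 * s = s * 2 := by ring
            _ ≤ s * k := Nat.mul_le_mul_left s this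
          omega
        have hbound : ∀ u : ℕ, u < k → p ^ (s * u) < p ^ r - 1 := by
          intro u hu
          have h1 : s * u ≤ r - s := by
            have : s * u ≤ s * (k - 1) := Nat.mul_le_mul_left s (by omega)
            have h2 : s * (k - 1) = r - s := by
              rw [Nat.mul_sub_one]
              omega
            omega
          have h2 : p ^ (s * u) ≤ p ^ (r - 1) := by
            apply Nat.pow_le_pow_right hp.pos
            omega
          have h3 : p ^ (r - 1) < p ^ r - 1 := by
            have h4 : p ^ r = p ^ (r - 1) * p := by
              rw [← pow_succ]
              congr 1
              omega
            have h5 : 2 ≤ p := hp.two_le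
            have h7 : 2 ≤ r := by omega
            have h8 : 2 ≤ p ^ (r - 1) := by
              have h9 : p ^ 1 ≤ p ^ (r - 1) := Nat.pow_le_pow_right hp.pos (by omega)
              rw [pow_one] at h9
              omega
            have h10 : p ^ (r - 1) * 2 ≤ p ^ (r - 1) * p := Nat.mul_le_mul_left _ h5
            omega
          omega
        have hb1 := hbound t ht
        have hb2 := hbound t' ht'
        have := hmod
        unfold Nat.ModEq at this
        rw [Nat.mod_eq_of_lt hb1, Nat.mod_eq_of_lt hb2] at this
        have hst : s * t = s * t' := Nat.pow_right_injective hp.two_le this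
        exact Nat.eq_of_mul_eq_mul_left hs hst
    subst htt
    have hωne2 : ω ^ (e * gs t) ≠ 0 := pow_ne_zero _ hω0
    have heq4 : ω ^ (d * j) * ω ^ (e * gs t) = ω ^ (d * j') * ω ^ (e * gs t) := by
      rw [← pow_add, ← pow_add]; exact heq1
    have heq5 : ω ^ (d * j) = ω ^ (d * j') := mul_right_cancel₀ hωne2 heq4
    have hmod2 : d * j ≡ d * j' [MOD p ^ r - 1] := hpowinj _ _ heq5
    have hjb : d * j < p ^ r - 1 := by
      have : d * j < d * D := (Nat.mul_lt_mul_left hd).mpr hj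
      omega
    have hjb' : d * j' < p ^ r - 1 := by
      have : d * j' < d * D := (Nat.mul_lt_mul_left hd).mpr hj'
      omega
    have : d * j = d * j' := by
      have := hmod2
      unfold Nat.ModEq at this
      rwa [Nat.mod_eq_of_lt hjb, Nat.mod_eq_of_lt hjb'] at this
    have hjj : j = j' := Nat.eq_of_mul_eq_mul_left hd this
    subst hjj
    rfl
  -- final count
  rw [hHS]
  have hcardS : Nat.card S = D * k := by
    have h1 : Nat.card S = Nat.card (Set.range G) := Nat.card_congr (Equiv.setCongr hTG)
    rw [h1, Nat.card_range_of_injective hGinj, Nat.card_eq_fintype_card]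
    simp
  rw [hcardS, hDdef, hkdef, Nat.div_mul_div_comm hdq hsr]
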